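/- Let X be a nontrivial topological vector space over ℝ and let f : X → ℝ be a discontinuous additive function. Then the set T = {x ∈ X : f(x) ≥ 0} satisfies T − T = X (so T − T is a neighborhood of zero), yet T does not belong to the Kuczma–Ger class 𝓑_X: the additive function −f is discontinuous and satisfies sup (−f)[T] ≤ 0 < ∞. -/

import Mathlib

open Set Filter Topology Pointwise

/-- If `f` is a discontinuous additive functional on a nontrivial topological vector space,
then `T = {x | f x ≥ 0}` satisfies `T - T = X` (so `T - T` is a neighborhood of zero), yet
`T ∉ 𝓑_X`: the additive functional `-f` is discontinuous and `sup (-f)[T] ≤ 0 < ∞`. -/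
theorem statement4 {X : Type*} [TopologicalSpace X] [AddCommGroup X] [Module ℝ X]
    [IsTopologicalAddGroup X] [ContinuousSMul ℝ X] [Nontrivial X]
    (f : X → ℝ) (hadd : ∀ x y : X, f (x + y) = f x + f y) (hdisc : ¬ Continuous f) :
    {x : X | 0 ≤ f x} - {x : X | 0 ≤ f x} = Set.univ ∧
    {x : X | 0 ≤ f x} - {x : X | 0 ≤ f x} ∈ nhds (0 : X) ∧
    (∀ x y : X, (-f) (x + y) = (-f) x + (-f) y) ∧
    ¬ Continuous (-f) ∧
    (∀ x ∈ {x : X | 0 ≤ f x}, (-f) x ≤ 0) := by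
  have hf0 : f 0 = 0 := by have := hadd 0 0; simp at this; linarith
  have hneg : ∀ x : X, f (-x) = -f x := by
    intro x; have := hadd x (-x); simp [hf0] at this; linarith
  have huniv : {x : X | 0 ≤ f x} - {x : X | 0 ≤ f x} = Set.univ := by
    ext x
    simp only [Set.mem_sub, Set.mem_setOf_eq, Set.mem_univ, iff_true]
    rcases le_or_gt 0 (f x) with h | h
    · exact ⟨x, h, 0, le_of_eq hf0.symm, by simp⟩
    · exact ⟨0, le_of_eq hf0.symm, -x, by rw [hneg]; linarith, by simp⟩
  refine ⟨huniv, by rw [huniv]; exact Filter.univ_mem, ?_, ?_, ?_⟩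
  · intro x y; simp [hadd x y]; ring
  · intro h
    exact hdisc (by simpa using h.neg)
  · intro x hx; simpa using hx
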